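/- Let a be even, b odd positive, gcd(a,b) = 1, and define Q(a;b) := 6·(s(a;2b) + s(2a;b) − 2·s(a;b)). If Q(a;b) is an integer, then a² ≡ −1 (mod b); consequently Q(a;b) = 0 if and only if a² ≡ −1 (mod b). -/

import Mathlib

open Finset Real

/-- The classical Dedekind sum `s(a;b)` defined by the cotangent sum. -/
noncomputable def dedekindS (a : ℤ) (b : ℕ) : ℝ :=
  (1 / (4 * (b : ℝ))) * ∑ ν ∈ Finset.Ico 1 b,
    Real.cot (Real.pi * a * ν / b) * Real.cot (Real.pi * ν / b)

/-- The rational part `Q(a;b)` of the elliptic classical Dedekind sum. -/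
noncomputable def Qpart (a b : ℕ) : ℝ :=
  6 * (dedekindS a (2 * b) + dedekindS (2 * a) b - 2 * dedekindS a b)

set_option linter.unusedTactic false
set_option linter.unusedSectionVars false

noncomputable def gg (x : ℝ) : ℝ := Int.fract x - 1/2

lemma gg_add_int (x : ℝ) (m : ℤ) : gg (x + m) = gg x := by
  simp [gg, Int.fract_add_intCast]

lemma gg_half : gg (1/2) = 0 := by
  have : Int.fract ((1:ℝ)/2) = 1/2 := by
    rw [Int.fract_eq_self]
    refine ⟨by norm_num, by norm_num⟩
  unfold gg
  rw [this]
  ring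

lemma fract_cases (f : ℝ) (h0 : 0 ≤ f) (h1 : f < 1) :
    (Int.fract (f + 1/2) = f + 1/2 ∧ Int.fract (2*f) = 2*f ∧ f < 1/2) ∨
    (Int.fract (f + 1/2) = f - 1/2 ∧ Int.fract (2*f) = 2*f - 1 ∧ ¬ f < 1/2) := by
  rcases lt_or_ge f (1/2) with h | h
  · left
    refine ⟨?_, ?_, h⟩
    · rw [Int.fract_eq_self]; constructor <;> linarith
    · rw [Int.fract_eq_self]; constructor <;> linarith
  · right
    refine ⟨?_, ?_, by linarith⟩
    · conv_lhs => rw [show f + 1/2 = (f - 1/2) + ((1:ℤ):ℝ) by push_cast; ring]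
      rw [Int.fract_add_intCast, Int.fract_eq_self]
      constructor <;> linarith
    · conv_lhs => rw [show 2*f = (2*f - 1) + ((1:ℤ):ℝ) by push_cast; ring]
      rw [Int.fract_add_intCast, Int.fract_eq_self]
      constructor <;> linarith

/-- key identity: g(x+1/2) = g(2x) - g(x). -/
lemma gg_half_id (x : ℝ) : gg (x + 1/2) = gg (2*x) - gg x := by
  have hx : (⌊x⌋ : ℝ) + Int.fract x = x := by
    rw [← Int.self_sub_floor]; ring
  set f := Int.fract x with hf
  have e1 : gg (x + 1/2) = gg (f + 1/2) := by
    rw [← hx]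
    rw [show (⌊x⌋:ℝ) + f + 1/2 = (f + 1/2) + (⌊x⌋:ℤ) by push_cast; ring, gg_add_int]
  have e2 : gg (2*x) = gg (2*f) := by
    rw [← hx]
    rw [show 2*((⌊x⌋:ℝ) + f) = (2*f) + ((2*⌊x⌋ : ℤ):ℝ) by push_cast; ring, gg_add_int]
  have e3 : gg x = gg f := by
    rw [← hx, show (⌊x⌋:ℝ) + f = f + (⌊x⌋:ℤ) by push_cast; ring, gg_add_int]
  rw [e1, e2, e3]
  have h0 := Int.fract_nonneg x
  have h1 := Int.fract_lt_one x
  rcases fract_cases f h0 h1 with ⟨a1, a2, _⟩ | ⟨a1, a2, _⟩ <;>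
    · unfold gg
      rw [a1, a2]
      have hff : Int.fract f = f := by rw [Int.fract_eq_self]; exact ⟨h0, h1⟩
      rw [hff]; ring


section
variable {M : Type*} [AddCommMonoid M]

lemma per_int (b : ℕ) (f : ℤ → M) (hf : ∀ m, f (m + b) = f m) (m k : ℤ) :
    f (m + b * k) = f m := by
  induction k using Int.induction_on with
  | zero => simp
  | succ i ih =>
      rw [show m + (b:ℤ) * (i+1) = (m + b*i) + b by ring, hf, ih]
  | pred i ih =>
      rw [show m + (b:ℤ) * (-i-1) = (m + b*(-i) - b) by ring]
      have h := hf (m + (b:ℤ)*(-i) - b)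
      rw [sub_add_cancel] at h
      rw [← h]; exact ih

lemma per_emod (b : ℕ) (f : ℤ → M) (hf : ∀ m, f (m + b) = f m) (m : ℤ) :
    f (m % b) = f m := by
  have h : m = m % b + (b:ℤ) * (m / b) := by rw [Int.emod_def]; ring
  conv_rhs => rw [h]
  rw [per_int b f hf]

lemma emod_mem_range (b : ℕ) (hb : 0 < b) (x : ℤ) : (x % b).toNat ∈ range b := by
  have h1 : 0 ≤ x % b := Int.emod_nonneg x (by exact_mod_cast hb.ne')
  have h2 : x % b < b := Int.emod_lt_of_pos x (by exact_mod_cast hb)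
  simp only [mem_range]
  omega

lemma modeq_emod (b : ℕ) (x : ℤ) : Int.ModEq b (x % b) x := Int.emod_emod_of_dvd x dvd_rfl

lemma sum_perm (b : ℕ) (hb : 0 < b) (f : ℤ → M) (hf : ∀ m, f (m + b) = f m)
    (c d : ℤ) (hcd : (b:ℤ) ∣ (c * d - 1)) :
    ∑ μ ∈ range b, f (c * μ) = ∑ μ ∈ range b, f μ := by
  have hbz : (b:ℤ) ≠ 0 := by exact_mod_cast hb.ne'
  have key : ∀ (u v : ℤ), (b:ℤ) ∣ (u * v - 1) → ∀ μ ∈ range b, ((u * ((v * μ) % b).toNat) % b).toNat = μ := by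
    intro u v huv μ hμ
    have hμb : (μ:ℤ) < b := by exact_mod_cast mem_range.mp hμ
    have h1 : ((( (v * μ) % b).toNat : ℤ)) = (v*μ) % b := Int.toNat_of_nonneg (Int.emod_nonneg _ hbz)
    have h2 : (u * ((v * μ) % b).toNat) % b = (u * (v * μ)) % b := by
      rw [h1]
      exact ((modeq_emod b (v*μ)).mul_left u)
    have h3 : (u * (v*μ)) % b = (μ:ℤ) % b := by
      refine Int.ModEq.symm (Int.modEq_iff_dvd.mpr ?_)
      have h := huv.mul_right (μ:ℤ)
      have e : (u*v - 1) * μ = u*(v*μ) - μ := by ring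
      rwa [e] at h
    have h4 : (μ:ℤ) % b = μ := Int.emod_eq_of_lt (by positivity) hμb
    have h5 : ((u * ((v * μ) % b).toNat) % b) = (μ:ℤ) := by rw [h2, h3, h4]
    omega
  refine Finset.sum_nbij' (fun μ => ((c*μ) % b).toNat) (fun ν => ((d*ν) % b).toNat)
    ?_ ?_ ?_ ?_ ?_
  · intro μ _; exact emod_mem_range b hb _
  · intro ν _; exact emod_mem_range b hb _
  · intro μ hμ
    beta_reduce
    exact key d c (by rwa [mul_comm] at hcd) μ hμ
  · intro ν hν
    beta_reduce
    exact key c d hcd ν hν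
  · intro μ _
    beta_reduce
    rw [← per_emod b f hf (c*μ), ← Int.toNat_of_nonneg (Int.emod_nonneg (c*μ) hbz)]
    norm_num

lemma sum_shift (b : ℕ) (hb : 0 < b) (f : ℤ → M) (hf : ∀ m, f (m + b) = f m)
    (t : ℤ) :
    ∑ μ ∈ range b, f (μ + t) = ∑ μ ∈ range b, f μ := by
  have hbz : (b:ℤ) ≠ 0 := by exact_mod_cast hb.ne'
  have key : ∀ (u : ℤ), ∀ μ ∈ range b, (((((μ:ℤ) + u) % b).toNat : ℤ) - u) % b = μ := by
    intro u μ hμ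
    have hμb : (μ:ℤ) < b := by exact_mod_cast mem_range.mp hμ
    have h1 : ((((μ:ℤ) + u) % b).toNat : ℤ) = ((μ:ℤ)+u) % b := Int.toNat_of_nonneg (Int.emod_nonneg _ hbz)
    rw [h1]
    have h2 : (((μ:ℤ) + u) % b - u) % b = (((μ:ℤ) + u) - u) % b :=
      (modeq_emod b ((μ:ℤ)+u)).sub_right u
    rw [h2, add_sub_cancel_right]
    exact Int.emod_eq_of_lt (by positivity) hμb
  refine Finset.sum_nbij' (fun μ => (((μ:ℤ) + t) % b).toNat) (fun ν => (((ν:ℤ) - t) % b).toNat)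
    ?_ ?_ ?_ ?_ ?_
  · intro μ _; exact emod_mem_range b hb _
  · intro ν _; exact emod_mem_range b hb _
  · intro μ hμ
    beta_reduce
    have h := key t μ hμ
    omega
  · intro ν hν
    beta_reduce
    have h := key (-t) ν hν
    rw [show (ν:ℤ) + -t = (ν:ℤ) - t by ring] at h
    rw [sub_neg_eq_add] at h
    omega
  · intro μ _
    beta_reduce
    rw [← per_emod b f hf ((μ:ℤ)+t), ← Int.toNat_of_nonneg (Int.emod_nonneg ((μ:ℤ)+t) hbz)]
    norm_num

lemma sum_range_bot (b : ℕ) (hb : 0 < b) (F : ℕ → M) :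
    ∑ μ ∈ range b, F μ = F 0 + ∑ μ ∈ Ico 1 b, F μ := by
  rw [range_eq_Ico, Finset.sum_eq_sum_Ico_succ_bot hb]

end



lemma gg_neg (x : ℝ) (h : Int.fract x ≠ 0) : gg (-x) = - gg x := by
  unfold gg
  rw [Int.fract_neg h]
  ring


lemma fract_intCast_div (n : ℕ) (hn : 0 < n) (m : ℤ) :
    Int.fract ((m:ℝ)/n) = ((m % n : ℤ) : ℝ)/n := by
  have hnR : (0:ℝ) < n := by exact_mod_cast hn
  have e : ((m % n : ℤ):ℝ) + (n:ℝ)*((m / n : ℤ):ℝ) = (m:ℝ) := by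
    exact_mod_cast congrArg (Int.cast : ℤ → ℝ) (Int.emod_add_mul_ediv m n)
  have h : (m:ℝ)/n = ((m % n : ℤ):ℝ)/n + ((m / n : ℤ):ℝ) := by
    field_simp
    linarith [e]
  rw [h, Int.fract_add_intCast, Int.fract_eq_self]
  constructor
  · apply div_nonneg _ hnR.le
    exact_mod_cast Int.emod_nonneg m (by exact_mod_cast hn.ne')
  · rw [div_lt_one hnR]
    exact_mod_cast Int.emod_lt_of_pos m (by exact_mod_cast hn)

lemma fract_div_ne_zero (n : ℕ) (hn : 0 < n) (m : ℤ) (h : ¬ (n:ℤ) ∣ m) :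
    Int.fract ((m:ℝ)/n) ≠ 0 := by
  rw [fract_intCast_div n hn m]
  have h1 : m % n ≠ 0 := fun hc => h (Int.dvd_of_emod_eq_zero hc)
  have hnR : (0:ℝ) < n := by exact_mod_cast hn
  intro hc
  rcases div_eq_zero_iff.mp hc with hc1 | hc2
  · exact h1 (by exact_mod_cast hc1)
  · exact hnR.ne' hc2

/-- signed residue -/
noncomputable def rr (b : ℕ) (m : ℤ) : ℤ := m - b * ⌊(m:ℝ)/b + 1/2⌋

lemma gg_rr (b : ℕ) (hb : 0 < b) (m : ℤ) : gg ((m:ℝ)/b + 1/2) = (rr b m : ℝ)/b := by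
  have hbR : (0:ℝ) < b := by exact_mod_cast hb
  unfold gg rr
  rw [Int.fract]
  push_cast
  field_simp
  ring

lemma rr_period (b : ℕ) (hb : 0 < b) (m : ℤ) : rr b (m + b) = rr b m := by
  unfold rr
  have hbR : (0:ℝ) ≠ 0 → True := fun _ => trivial
  have e : ((m + b : ℤ):ℝ)/b + 1/2 = ((m:ℝ)/b + 1/2) + 1 := by
    have : (b:ℝ) ≠ 0 := by positivity
    field_simp
    push_cast; ring
  rw [e]
  rw [show ((m:ℝ)/b + 1/2) + 1 = ((m:ℝ)/b + 1/2) + ((1:ℤ):ℝ) by norm_num, Int.floor_add_intCast]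
  ring

lemma fract_half_ne_zero (b : ℕ) (hbodd : Odd b) (m : ℤ) :
    Int.fract ((m:ℝ)/b + 1/2) ≠ 0 := by
  have hb : 0 < b := hbodd.pos
  have hbR : (0:ℝ) < b := by exact_mod_cast hb
  have e : (m:ℝ)/b + 1/2 = ((2*m + b : ℤ):ℝ)/((2*b : ℕ):ℝ) := by
    push_cast
    field_simp
  rw [e]
  apply fract_div_ne_zero (2*b) (by omega) _
  intro ⟨k, hk⟩
  obtain ⟨j, hj⟩ := hbodd
  push_cast at hk
  have : (b:ℤ) = 2*((b:ℤ)*k - m) := by linarith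
  omega

lemma rr_neg (b : ℕ) (hbodd : Odd b) (m : ℤ) : rr b (-m) = - rr b m := by
  have hb : 0 < b := hbodd.pos
  have hbR : (0:ℝ) < b := by exact_mod_cast hb
  have h1 : gg (((-m : ℤ):ℝ)/b + 1/2) = - gg ((m:ℝ)/b + 1/2) := by
    have e : ((-m : ℤ):ℝ)/b + 1/2 = (-(((m:ℝ))/b + 1/2)) + ((1:ℤ):ℝ) := by
      push_cast; field_simp; ring
    rw [e, gg_add_int, gg_neg _ (fract_half_ne_zero b hbodd m)]
  rw [gg_rr b hb, gg_rr b hb] at h1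
  have h2 : ((rr b (-m) : ℤ):ℝ) = ((- rr b m : ℤ):ℝ) := by
    push_cast at h1 ⊢
    field_simp at h1
    linarith
  exact_mod_cast h2

lemma rr_val (b : ℕ) (μ : ℕ) (hb : 0 < b) (h : μ < b) :
    rr b μ = if 2*μ < b then (μ:ℤ) else (μ:ℤ) - b := by
  have hbR : (0:ℝ) < b := by exact_mod_cast hb
  have hμ0 : (0:ℝ) ≤ (μ:ℝ)/b := by positivity
  have hμ1 : (μ:ℝ)/b < 1 := by
    rw [div_lt_one hbR]; exact_mod_cast h
  unfold rr
  by_cases hc : 2*μ < b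
  · rw [if_pos hc]
    have : ⌊((μ:ℤ):ℝ)/b + 1/2⌋ = 0 := by
      rw [Int.floor_eq_zero_iff]
      constructor
      · push_cast; positivity
      · push_cast
        have : (μ:ℝ)/b < 1/2 := by
          rw [div_lt_iff₀ hbR]
          have : (2*μ : ℕ) < b := hc
          have := (Nat.cast_lt (α := ℝ)).mpr this
          push_cast at this
          linarith
        linarith
    rw [this]; ring
  · rw [if_neg hc]
    have : ⌊((μ:ℤ):ℝ)/b + 1/2⌋ = 1 := by
      rw [Int.floor_eq_iff]
      constructor
      · push_cast
        have : (1:ℝ)/2 ≤ (μ:ℝ)/b := by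
          rw [le_div_iff₀ hbR]
          have : b ≤ 2*μ := not_lt.mp hc
          have := (Nat.cast_le (α := ℝ)).mpr this
          push_cast at this
          linarith
        linarith
      · push_cast; linarith
    rw [this]; ring

lemma sum_sq (n : ℕ) : 6 * ∑ i ∈ range n, (i:ℤ)^2 = n*(n-1)*(2*n-1) := by
  induction n with
  | zero => simp
  | succ k ih =>
      rw [Finset.sum_range_succ]
      push_cast
      push_cast at ih
      ring_nf
      ring_nf at ih
      nlinarith [ih]

lemma rr_sq_sum (b : ℕ) (hbodd : Odd b) :
    12 * ∑ μ ∈ range b, (rr b μ)^2 = b*((b:ℤ)^2-1) := by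
  obtain ⟨M, hM⟩ := hbodd
  have hb : 0 < b := by omega
  have hsplit : ∑ μ ∈ range b, (rr b μ)^2
      = ∑ μ ∈ range (M+1), (rr b μ)^2 + ∑ μ ∈ Ico (M+1) b, (rr b μ)^2 := by
    rw [range_eq_Ico, ← Finset.sum_Ico_consecutive _ (by omega : 0 ≤ M+1) (by omega : M+1 ≤ b),
      ← range_eq_Ico]
  have h1 : ∑ μ ∈ range (M+1), (rr b μ)^2 = ∑ μ ∈ range (M+1), (μ:ℤ)^2 := by
    apply Finset.sum_congr rfl
    intro μ hμ
    have hμM : μ < M + 1 := mem_range.mp hμ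
    rw [rr_val b μ hb (by omega), if_pos (by omega)]
  have h2 : ∑ μ ∈ Ico (M+1) b, (rr b μ)^2 = ∑ μ ∈ range (M+1), (μ:ℤ)^2 := by
    rw [Finset.sum_Ico_eq_sum_range]
    have hbM : b - (M+1) = M := by omega
    rw [hbM]
    have e1 : ∑ ν ∈ range M, (rr b (((M+1+ν : ℕ):ℤ)))^2 = ∑ ν ∈ range M, ((ν:ℤ) - M)^2 := by
      apply Finset.sum_congr rfl
      intro ν hν
      have hνM : ν < M := mem_range.mp hν
      rw [rr_val b (M+1+ν) hb (by omega), if_neg (by omega)]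
      have : ((M+1+ν : ℕ):ℤ) - b = (ν:ℤ) - M := by push_cast; omega
      rw [this]
    rw [e1]
    have e2 : ∑ ν ∈ range M, ((ν:ℤ) - M)^2 = ∑ ν ∈ range M, ((ν:ℤ) + 1)^2 := by
      rw [← Finset.sum_range_reflect (fun ν => ((ν:ℤ) - M)^2) M]
      apply Finset.sum_congr rfl
      intro j hj
      have hjM : j < M := mem_range.mp hj
      have : ((M - 1 - j : ℕ):ℤ) = (M:ℤ) - 1 - j := by push_cast; omega
      rw [this]
      ring
    rw [e2]
    rw [Finset.sum_range_succ' (fun ν => (ν:ℤ)^2) M]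
    push_cast
    ring
  have hX := sum_sq (M+1)
  have hbZ : (b:ℤ) = 2*M + 1 := by exact_mod_cast congrArg (Nat.cast : ℕ → ℤ) hM
  rw [hsplit, h1, h2]
  rw [hbZ]
  push_cast at hX ⊢
  linear_combination 4 * hX

lemma sum_gg_zero (n : ℕ) (hn : 0 < n) : ∑ k ∈ Ico 1 n, gg ((k:ℝ)/n) = 0 := by
  have hnR : (0:ℝ) < n := by exact_mod_cast hn
  have hgg : ∀ k ∈ Ico 1 n, gg ((k:ℝ)/n) = (k:ℝ)/n - 1/2 := by
    intro k hk
    obtain ⟨hk1, hk2⟩ := mem_Ico.mp hk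
    unfold gg
    rw [Int.fract_eq_self.mpr ⟨by positivity, by rw [div_lt_one hnR]; exact_mod_cast hk2⟩]
  rw [Finset.sum_congr rfl hgg]
  have hsum : ∑ k ∈ Ico 1 n, (k:ℝ) = (n*(n-1):ℝ)/2 := by
    have h0 : ∑ k ∈ Ico 1 n, (k:ℕ) = ∑ k ∈ range n, (k:ℕ) := by
      rw [range_eq_Ico, Finset.sum_eq_sum_Ico_succ_bot hn]
      simp
    have h1 : (∑ i ∈ range n, i) * 2 = n * (n - 1) := Finset.sum_range_id_mul_two n
    have h2 : ((∑ k ∈ Ico 1 n, (k:ℕ) : ℕ):ℝ) = ∑ k ∈ Ico 1 n, (k:ℝ) := by push_cast; rfl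
    rw [← h2, h0]
    have h3 : ((n*(n-1) : ℕ) : ℝ) = (n:ℝ)*((n:ℝ)-1) := by
      push_cast [Nat.cast_sub (by omega : 1 ≤ n)]
      ring
    have h4 : ((∑ i ∈ range n, i) * 2 : ℕ) = ((n * (n-1) : ℕ)) := h1
    have h5 : ((∑ i ∈ range n, (i:ℕ) : ℕ):ℝ) * 2 = (n:ℝ)*((n:ℝ)-1) := by
      rw [← h3]
      exact_mod_cast congrArg (Nat.cast : ℕ → ℝ) h4
    linarith
  rw [Finset.sum_sub_distrib, Finset.sum_const, Nat.card_Ico, ← Finset.sum_div, hsum]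
  have hcard : ((n - 1 : ℕ):ℝ) = (n:ℝ) - 1 := by
    push_cast [Nat.cast_sub (by omega : 1 ≤ n)]
    ring
  rw [nsmul_eq_mul, hcard]
  field_simp
  ring

noncomputable def om (n : ℕ) : ℂ := Complex.exp (2*Real.pi*Complex.I/n)

noncomputable def FF (n : ℕ) (m : ℤ) : ℂ :=
  ∑ k ∈ Ico 1 n, (gg ((k:ℝ)/n) : ℂ) * om n ^ (m * k)

lemma om_prim (n : ℕ) (hn : 0 < n) : IsPrimitiveRoot (om n) n := by
  unfold om
  exact Complex.isPrimitiveRoot_exp n hn.ne'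

lemma om_pow_n (n : ℕ) (hn : 0 < n) : om n ^ (n : ℕ) = 1 := (om_prim n hn).pow_eq_one

lemma om_zpow_eq_one_iff (n : ℕ) (hn : 0 < n) (m : ℤ) : om n ^ m = 1 ↔ (n:ℤ) ∣ m :=
  (om_prim n hn).zpow_eq_one_iff_dvd m

lemma FF_dvd (n : ℕ) (hn : 0 < n) (m : ℤ) (h : (n:ℤ) ∣ m) : FF n m = 0 := by
  unfold FF
  have h1 : ∀ k ∈ Ico 1 n, (gg ((k:ℝ)/n) : ℂ) * om n ^ (m * k) = (gg ((k:ℝ)/n) : ℂ) := by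
    intro k _
    rw [(om_zpow_eq_one_iff n hn (m*k)).mpr (h.mul_right k), mul_one]
  rw [Finset.sum_congr rfl h1, ← Complex.ofReal_sum, sum_gg_zero n hn, Complex.ofReal_zero]

lemma weighted_geom_aux (z : ℂ) (N : ℕ) :
    (z - 1) * ∑ k ∈ range N, (k:ℂ) * z^k
      = ((N:ℂ)-1)*z^N - ∑ k ∈ range N, z^k + 1 := by
  induction N with
  | zero => simp
  | succ p ih =>
      rw [Finset.sum_range_succ, Finset.sum_range_succ (fun k => z^k)]
      push_cast
      ring_nf
      ring_nf at ih
      linear_combination ih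

lemma geom_zero (z : ℂ) (hz1 : z ≠ 1) (n : ℕ) (hzn : z^n = 1) :
    ∑ k ∈ range n, z^k = 0 := by
  rw [geom_sum_eq hz1, hzn, sub_self, zero_div]

lemma weighted_geom (z : ℂ) (hz1 : z ≠ 1) (n : ℕ) (hzn : z^n = 1) :
    (z - 1) * ∑ k ∈ range n, (k:ℂ) * z^k = n := by
  rw [weighted_geom_aux, hzn, geom_zero z hz1 n hzn]
  ring

lemma FF_not_dvd (n : ℕ) (hn : 0 < n) (m : ℤ) (h : ¬ (n:ℤ) ∣ m) :
    FF n m = 1/(om n ^ m - 1) + 1/2 := by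
  set z := om n ^ m with hz
  have hz1 : z ≠ 1 := fun hc => h ((om_zpow_eq_one_iff n hn m).mp hc)
  have hzsub : z - 1 ≠ 0 := sub_ne_zero.mpr hz1
  have hzn : z ^ n = 1 := by
    rw [hz, ← zpow_natCast (om n ^ m) n, ← zpow_mul, mul_comm, zpow_mul, zpow_natCast,
      om_pow_n n hn, one_zpow]
  have hnR : (0:ℝ) < n := by exact_mod_cast hn
  have hgg : ∀ k ∈ Ico 1 n, (gg ((k:ℝ)/n) : ℂ) * om n ^ (m * k)
      = ((k:ℂ)/n - 1/2) * z^k := by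
    intro k hk
    obtain ⟨hk1, hk2⟩ := mem_Ico.mp hk
    have e1 : gg ((k:ℝ)/n) = (k:ℝ)/n - 1/2 := by
      unfold gg
      rw [Int.fract_eq_self.mpr ⟨by positivity, by rw [div_lt_one hnR]; exact_mod_cast hk2⟩]
    have e2 : om n ^ (m * k) = z ^ k := by
      rw [zpow_mul, hz, zpow_natCast]
    rw [e1, e2]
    push_cast
    ring
  unfold FF
  rw [Finset.sum_congr rfl hgg]
  have hsplit : ∑ k ∈ Ico 1 n, ((k:ℂ)/n - 1/2) * z^k
      = (1/n) * (∑ k ∈ Ico 1 n, (k:ℂ)*z^k) - (1/2) * ∑ k ∈ Ico 1 n, z^k := by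
    rw [Finset.mul_sum, Finset.mul_sum, ← Finset.sum_sub_distrib]
    apply Finset.sum_congr rfl
    intro k _
    ring
  rw [hsplit]
  have hr1 : ∑ k ∈ Ico 1 n, (k:ℂ)*z^k = ∑ k ∈ range n, (k:ℂ)*z^k := by
    rw [sum_range_bot n hn (fun k => (k:ℂ)*z^k)]
    simp
  have hr2 : ∑ k ∈ Ico 1 n, z^k = -1 := by
    have h2 := sum_range_bot n hn (fun k => z^k)
    rw [geom_zero z hz1 n hzn] at h2
    simp only [pow_zero] at h2
    linear_combination -h2
  have hr3 : ∑ k ∈ range n, (k:ℂ)*z^k = n/(z-1) := by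
    have := weighted_geom z hz1 n hzn
    field_simp
    linear_combination this
  rw [hr1, hr2, hr3]
  have hnC : (n:ℂ) ≠ 0 := by exact_mod_cast hn.ne'
  field_simp
  ring

lemma cot_dvd (n : ℕ) (hn : 0 < n) (m : ℤ) (h : (n:ℤ) ∣ m) :
    Real.cot (Real.pi * m / n) = 0 := by
  obtain ⟨j, hj⟩ := h
  have hnR : (n:ℝ) ≠ 0 := by positivity
  have e : Real.pi * m / n = (j:ℝ) * Real.pi := by
    rw [hj]
    push_cast
    field_simp
  rw [Real.cot_eq_cos_div_sin, e, Real.sin_int_mul_pi, div_zero]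

lemma cot_core (w : ℂ) :
    (Complex.exp w + Complex.exp (-w))/2 * ((Complex.exp w)^2 - 1)
      = Complex.I * ((Complex.exp w)^2+1) * ((Complex.exp (-w) - Complex.exp w)*Complex.I/2) := by
  rw [Complex.exp_neg]
  have hu := Complex.exp_ne_zero w
  field_simp
  ring_nf
  rw [Complex.I_sq]
  ring

lemma cot_eq_FF (n : ℕ) (hn : 0 < n) (m : ℤ) :
    ((Real.cot (Real.pi * m / n) : ℝ) : ℂ) = 2*Complex.I*FF n m := by
  by_cases h : (n:ℤ) ∣ m
  · rw [cot_dvd n hn m h, FF_dvd n hn m h]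
    simp
  · rw [FF_not_dvd n hn m h]
    have hnR : (0:ℝ) < n := by exact_mod_cast hn
    set x : ℝ := Real.pi * m / n with hx
    have huz : (Complex.exp ((x:ℂ) * Complex.I))^2 = om n ^ m := by
      rw [← Complex.exp_nat_mul]
      rw [show om n ^ m = Complex.exp ((m:ℂ) * (2*Real.pi*Complex.I/n)) from
        (Complex.exp_int_mul _ m).symm]
      congr 1
      rw [hx]
      push_cast
      field_simp
    have hz1 : om n ^ m ≠ 1 := fun hc => h ((om_zpow_eq_one_iff n hn m).mp hc)
    have hzsub : (Complex.exp ((x:ℂ) * Complex.I))^2 - 1 ≠ 0 := by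
      rw [huz]; exact sub_ne_zero.mpr hz1
    have hsin : Complex.sin x ≠ 0 := by
      rw [Complex.sin_ne_zero_iff]
      intro k hk
      apply h
      have hk2 : x = k * Real.pi := by exact_mod_cast hk
      rw [hx] at hk2
      have hpi : (Real.pi : ℝ) ≠ 0 := Real.pi_ne_zero
      have hm : (m:ℝ) = (k:ℝ) * n := by
        apply mul_left_cancel₀ hpi
        field_simp at hk2
        linear_combination Real.pi * hk2
      have hm2 : m = k * n := by exact_mod_cast hm
      exact ⟨k, by linarith [hm2]⟩
    have hcossin : Complex.cos x * ((Complex.exp ((x:ℂ) * Complex.I))^2 - 1)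
        = Complex.I * ((Complex.exp ((x:ℂ) * Complex.I))^2 + 1) * Complex.sin x := by
      rw [Complex.cos, Complex.sin, neg_mul]
      exact cot_core _
    have lhs : ((Real.cot x : ℝ) : ℂ) = Complex.cos x / Complex.sin x := by
      rw [Complex.ofReal_cot, Complex.cot_eq_cos_div_sin]
    rw [lhs, div_eq_iff hsin]
    have target : 2*Complex.I*(1/(om n ^ m - 1) + 1/2)
        = Complex.I * ((Complex.exp ((x:ℂ) * Complex.I))^2 + 1)/((Complex.exp ((x:ℂ) * Complex.I))^2 - 1) := by
      rw [← huz]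
      rw [eq_div_iff hzsub, mul_assoc, add_mul, one_div_mul_cancel hzsub]
      ring
    rw [target, div_mul_eq_mul_div, eq_div_iff hzsub]
    linear_combination hcossin

lemma om_ne_zero (n : ℕ) : om n ≠ 0 := Complex.exp_ne_zero _

lemma orth (n : ℕ) (hn : 0 < n) (t : ℤ) :
    ∑ ν ∈ range n, (om n ^ t)^ν = if (n:ℤ) ∣ t then (n:ℂ) else 0 := by
  by_cases h : (n:ℤ) ∣ t
  · rw [if_pos h, (om_zpow_eq_one_iff n hn t).mpr h]
    simp
  · rw [if_neg h]
    have h1 : om n ^ t ≠ 1 := fun hc => h ((om_zpow_eq_one_iff n hn t).mp hc)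
    have h2 : (om n ^ t) ^ n = 1 := by
      rw [← zpow_natCast (om n ^ t) n, ← zpow_mul, mul_comm, zpow_mul, zpow_natCast,
        om_pow_n n hn, one_zpow]
    exact geom_zero _ h1 n h2

lemma dedekind_eq_saw (n : ℕ) (hn : 0 < n) (c : ℤ)
    (H : ∀ k ∈ Ico 1 n, (n:ℤ) ∣ c*k → 2*k = n) :
    dedekindS c n = ∑ k ∈ Ico 1 n, gg ((k:ℝ)/n) * gg (((c*k : ℤ):ℝ)/n) := by
  have hnR : (0:ℝ) < n := by exact_mod_cast hn
  have hnC : (n:ℂ) ≠ 0 := by exact_mod_cast hn.ne'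
  apply Complex.ofReal_injective
  -- step A
  have stepA : ((dedekindS c n : ℝ):ℂ)
      = (1/(4*(n:ℂ))) * ∑ ν ∈ Ico 1 n, (2*Complex.I*FF n (c*ν)) * (2*Complex.I*FF n ν) := by
    unfold dedekindS
    rw [Complex.ofReal_mul, Complex.ofReal_sum]
    congr 1
    · push_cast; ring
    apply Finset.sum_congr rfl
    intro ν hν
    rw [Complex.ofReal_mul]
    have e1 : Real.pi * (c:ℝ) * (ν:ℝ) / n = Real.pi * ((c*(ν:ℤ) : ℤ):ℝ) / n := by
      push_cast; ring
    have e2 : Real.pi * (ν:ℝ) / n = Real.pi * (((ν:ℤ)) :ℝ) / n := by push_cast; ring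
    rw [e1, e2, cot_eq_FF n hn (c*(ν:ℤ)), cot_eq_FF n hn (ν:ℤ)]
  rw [stepA]
  -- (2I a)(2I b) = -4 a b
  have stepB : ∀ (A B : ℂ), (2*Complex.I*A) * (2*Complex.I*B) = -4*(A*B) := by
    intro A B
    have : Complex.I^2 = -1 := Complex.I_sq
    linear_combination (4*A*B) * this
  have stepB' : ∑ ν ∈ Ico 1 n, (2*Complex.I*FF n (c*ν)) * (2*Complex.I*FF n ν)
      = -4 * ∑ ν ∈ Ico 1 n, FF n (c*ν) * FF n ν := by
    rw [Finset.mul_sum]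
    exact Finset.sum_congr rfl (fun ν _ => stepB _ _)
  rw [stepB']
  -- extend to range n
  have stepC : ∑ ν ∈ Ico 1 n, FF n (c*ν) * FF n ν = ∑ ν ∈ range n, FF n (c*(ν:ℤ)) * FF n ν := by
    rw [sum_range_bot n hn (fun ν => FF n (c*(ν:ℤ)) * FF n (ν:ℤ))]
    have : FF n (c*((0:ℕ):ℤ)) = 0 := by
      apply FF_dvd n hn _ (by simp)
    rw [this]
    simp
  rw [stepC]
  -- expand double sum and orthogonality
  have stepD : ∑ ν ∈ range n, FF n (c*(ν:ℤ)) * FF n (ν:ℤ)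
      = ∑ k ∈ Ico 1 n, (gg ((k:ℝ)/n) : ℂ) *
          ∑ l ∈ Ico 1 n, (gg ((l:ℝ)/n) : ℂ) * (if (n:ℤ) ∣ (c*k + l) then (n:ℂ) else 0) := by
    have expand : ∀ ν ∈ range n, FF n (c*(ν:ℤ)) * FF n (ν:ℤ)
        = ∑ k ∈ Ico 1 n, ∑ l ∈ Ico 1 n,
            (gg ((k:ℝ)/n) : ℂ) * (gg ((l:ℝ)/n) : ℂ) * ((om n ^ (c*k+l))^(ν:ℕ)) := by
      intro ν _
      unfold FF
      rw [Finset.sum_mul_sum]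
      apply Finset.sum_congr rfl; intro k _
      apply Finset.sum_congr rfl; intro l _
      have : om n ^ ((c*ν) * k) * om n ^ ((ν:ℤ) * l) = (om n ^ (c*k+l))^(ν:ℕ) := by
        rw [← zpow_add₀ (om_ne_zero n),
          show (c*(ν:ℤ))*k + (ν:ℤ)*l = (c*k+l)*(ν:ℤ) by ring,
          zpow_mul, zpow_natCast]
      rw [← this]
      ring
    rw [Finset.sum_congr rfl expand]
    rw [Finset.sum_comm]
    apply Finset.sum_congr rfl
    intro k _
    rw [Finset.sum_comm, Finset.mul_sum]
    apply Finset.sum_congr rfl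
    intro l _
    rw [← Finset.mul_sum, orth n hn (c*(k:ℤ)+(l:ℤ))]
    ring
  rw [stepD]
  -- evaluate inner sum
  have stepE : ∀ k ∈ Ico 1 n, (gg ((k:ℝ)/n) : ℂ) *
      (∑ l ∈ Ico 1 n, (gg ((l:ℝ)/n) : ℂ) * (if (n:ℤ) ∣ (c*k + l) then (n:ℂ) else 0))
      = -(n:ℂ) * ((gg ((k:ℝ)/n) * gg (((c*k : ℤ):ℝ)/n) : ℝ) : ℂ) := by
    intro k hk
    obtain ⟨hk1, hk2⟩ := mem_Ico.mp hk
    by_cases hdvd : (n:ℤ) ∣ c*k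
    · have h2k := H k hk hdvd
      have hggk : gg ((k:ℝ)/n) = 0 := by
        have : (k:ℝ)/n = 1/2 := by
          rw [div_eq_div_iff hnR.ne' (by norm_num : (2:ℝ) ≠ 0)]
          have : ((2*k : ℕ):ℝ) = ((n:ℕ):ℝ) := by exact_mod_cast congrArg (Nat.cast : ℕ → ℝ) h2k
          push_cast at this
          linarith
        rw [this, gg_half]
      rw [hggk]
      simp
    · set l₀ : ℕ := ((-(c*k)) % n).toNat with hl₀
      have hl₀nn : (0:ℤ) ≤ (-(c*k)) % n := Int.emod_nonneg _ (by exact_mod_cast hn.ne')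
      have hl₀cast : ((l₀:ℕ):ℤ) = (-(c*k)) % n := Int.toNat_of_nonneg hl₀nn
      have hl₀lt : ((-(c*k)) % n) < n := Int.emod_lt_of_pos _ (by exact_mod_cast hn)
      have hl₀ne : (-(c*k)) % n ≠ 0 := by
        intro hc
        have : (n:ℤ) ∣ -(c*k) := Int.dvd_of_emod_eq_zero hc
        exact hdvd ((dvd_neg).mp this)
      have hl₀mem : l₀ ∈ Ico 1 n := by
        rw [mem_Ico]
        omega
      have hdvd0 : (n:ℤ) ∣ c*k + l₀ := by
        rw [hl₀cast, Int.emod_def]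
        exact ⟨-((-(c*k))/n), by ring⟩
      have hside : ∀ l ∈ Ico 1 n, l ≠ l₀ →
          (gg ((l:ℝ)/n) : ℂ) * (if (n:ℤ) ∣ (c*k + (l:ℤ)) then (n:ℂ) else 0) = 0 := by
          intro l hl hne
          obtain ⟨hl1, hl2⟩ := mem_Ico.mp hl
          rw [if_neg, mul_zero]
          intro hcon
          have hd : (n:ℤ) ∣ ((l:ℤ) - l₀) := by
            have := dvd_sub hcon hdvd0
            simpa using this
          have : ((l:ℤ) - l₀) = 0 := by
            apply Int.eq_zero_of_abs_lt_dvd hd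
            have b1 : (l:ℤ) < n := by exact_mod_cast hl2
            have b2 : (0:ℤ) ≤ (l:ℤ) := by positivity
            have b3 : ((l₀:ℕ):ℤ) < n := by rw [hl₀cast]; exact hl₀lt
            have b4 : (0:ℤ) ≤ ((l₀:ℕ):ℤ) := by positivity
            rw [abs_lt]
            constructor <;> linarith
          have : l = l₀ := by omega
          exact absurd this hne
      have hsum := Finset.sum_eq_single_of_mem l₀ hl₀mem hside
      rw [hsum, if_pos hdvd0]
      have hggl₀ : gg ((l₀:ℝ)/n) = - gg (((c*k : ℤ):ℝ)/n) := by
        have e1 : ((l₀:ℕ):ℝ) = (((-(c*k)) % n : ℤ):ℝ) := by exact_mod_cast hl₀cast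
        rw [e1]
        have e2 : gg ((((-(c*k)) % n : ℤ):ℝ)/n) = gg (((-(c*k) : ℤ):ℝ)/n) := by
          unfold gg
          rw [fract_intCast_div n hn, fract_intCast_div n hn,
            Int.emod_emod_of_dvd _ dvd_rfl]
        rw [e2]
        have e3 : ((-(c*k) : ℤ):ℝ)/n = -(((c*k : ℤ):ℝ)/n) := by push_cast; ring
        rw [e3, gg_neg _ (fract_div_ne_zero n hn _ hdvd)]
      rw [hggl₀]
      push_cast
      ring
  rw [Finset.sum_congr rfl stepE]
  rw [← Finset.mul_sum, Complex.ofReal_sum]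
  field_simp

noncomputable def AA (n : ℕ) (m : ℤ) : ℝ := gg ((m:ℝ)/n)
noncomputable def BB (n : ℕ) (m : ℤ) : ℝ := gg ((m:ℝ)/n + 1/2)

lemma AA_per (n : ℕ) (hn : 0 < n) (m : ℤ) : AA n (m + n) = AA n m := by
  unfold AA
  have hnR : (n:ℝ) ≠ 0 := by positivity
  rw [show ((m + (n:ℤ) : ℤ):ℝ)/n = (m:ℝ)/n + ((1:ℤ):ℝ) by push_cast; field_simp, gg_add_int]

lemma BB_per (n : ℕ) (hn : 0 < n) (m : ℤ) : BB n (m + n) = BB n m := by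
  unfold BB
  have hnR : (n:ℝ) ≠ 0 := by positivity
  rw [show ((m + (n:ℤ) : ℤ):ℝ)/n + 1/2 = ((m:ℝ)/n + 1/2) + ((1:ℤ):ℝ) by push_cast; field_simp; ring,
    gg_add_int]

lemma BB_eq (n : ℕ) (hn : 0 < n) (m : ℤ) : BB n m = AA n (2*m) - AA n m := by
  unfold AA BB
  have hnR : (n:ℝ) ≠ 0 := by positivity
  rw [gg_half_id ((m:ℝ)/n)]
  rw [show ((2*m : ℤ):ℝ)/n = 2*((m:ℝ)/n) by push_cast; ring]

/-- Ssaw over range with ℤ arguments -/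
noncomputable def SZ (c : ℤ) (n : ℕ) : ℝ := ∑ μ ∈ range n, AA n μ * AA n (c*μ)

lemma SZ_eq_saw (c : ℤ) (n : ℕ) (hn : 0 < n)
    (H : ∀ k ∈ Ico 1 n, (n:ℤ) ∣ c*k → 2*k = n) :
    SZ c n = 1/4 + dedekindS c n := by
  rw [dedekind_eq_saw n hn c H]
  unfold SZ
  rw [sum_range_bot n hn (fun μ => AA n μ * AA n (c*(μ:ℤ)))]
  have h0 : AA n ((0:ℕ):ℤ) * AA n (c*((0:ℕ):ℤ)) = 1/4 := by
    unfold AA gg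
    norm_num
  rw [h0]
  have : ∀ k ∈ Ico 1 n, AA n (k:ℤ) * AA n (c*(k:ℤ)) = gg ((k:ℝ)/n) * gg (((c*(k:ℤ) : ℤ):ℝ)/n) := by
    intro k _
    unfold AA
    norm_num
  rw [Finset.sum_congr rfl this]

lemma even_odd_split {M : Type*} [AddCommMonoid M] (m : ℕ) (G : ℕ → M) :
    ∑ l ∈ range (2*m), G l = ∑ μ ∈ range m, G (2*μ) + ∑ μ ∈ range m, G (2*μ+1) := by
  induction m with
  | zero => simp
  | succ p ih =>
      rw [show 2*(p+1) = (2*p)+1+1 by ring, Finset.sum_range_succ, Finset.sum_range_succ,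
        Finset.sum_range_succ (fun μ => G (2*μ)), Finset.sum_range_succ (fun μ => G (2*μ+1)), ih]
      abel

lemma key_real (a b : ℕ) (ha : 0 < a) (hb : 0 < b) (haev : Even a) (hbodd : Odd b)
    (hcop : Nat.gcd a b = 1) :
    (b:ℝ)^2 * Qpart a b = -6 * ((∑ μ ∈ range b, rr b μ * rr b ((a:ℤ)*μ) : ℤ) : ℝ) := by
  obtain ⟨a', ha'⟩ := haev
  have ha2 : a = 2*a' := by omega
  obtain ⟨j, hj⟩ := hbodd
  have hbR : (0:ℝ) < b := by exact_mod_cast hb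
  have hbZ : ((b:ℤ)) ≠ 0 := by exact_mod_cast hb.ne'
  -- coprimality in ℤ
  have hcopZ : IsCoprime (b:ℤ) (a:ℤ) := by
    rw [Int.isCoprime_iff_gcd_eq_one, Int.gcd_natCast_natCast, Nat.gcd_comm]
    exact hcop
  have hcop2 : IsCoprime (b:ℤ) (2:ℤ) := by
    have h1 : IsCoprime (b:ℤ) ((2:ℕ):ℤ) := by
      rw [Int.isCoprime_iff_gcd_eq_one, Int.gcd_natCast_natCast]
      have hnd : ¬ 2 ∣ b := by omega
      rcases Nat.coprime_or_dvd_of_prime Nat.prime_two b with hco | hdvd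
      · exact hco.symm
      · exact absurd hdvd hnd
    exact_mod_cast h1
  have hcopZ' : IsCoprime (b:ℤ) ((a':ℕ):ℤ) := by
    have : (a:ℤ) = 2*(a':ℤ) := by exact_mod_cast congrArg (Nat.cast : ℕ → ℤ) ha2
    rw [this] at hcopZ
    exact hcopZ.of_mul_right_right
  -- H hypotheses
  have H1 : ∀ k ∈ Ico 1 b, (b:ℤ) ∣ (a:ℤ)*k → 2*k = b := by
    intro k hk hdvd
    obtain ⟨hk1, hk2⟩ := mem_Ico.mp hk
    have hdk : (b:ℤ) ∣ (k:ℤ) := hcopZ.dvd_of_dvd_mul_left hdvd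
    have : (b:ℤ) ≤ (k:ℤ) := Int.le_of_dvd (by exact_mod_cast hk1) hdk
    have : b ≤ k := by exact_mod_cast this
    omega
  have H2 : ∀ k ∈ Ico 1 b, (b:ℤ) ∣ ((2*a : ℕ):ℤ)*k → 2*k = b := by
    intro k hk hdvd
    obtain ⟨hk1, hk2⟩ := mem_Ico.mp hk
    have hc2a : IsCoprime (b:ℤ) (((2*a : ℕ):ℤ)) := by
      push_cast
      exact hcop2.mul_right hcopZ
    have hdk : (b:ℤ) ∣ (k:ℤ) := hc2a.dvd_of_dvd_mul_left hdvd
    have : (b:ℤ) ≤ (k:ℤ) := Int.le_of_dvd (by exact_mod_cast hk1) hdk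
    have : b ≤ k := by exact_mod_cast this
    omega
  have H3 : ∀ k ∈ Ico 1 (2*b), ((2*b : ℕ):ℤ) ∣ (a:ℤ)*k → 2*k = 2*b := by
    intro k hk hdvd
    obtain ⟨hk1, hk2⟩ := mem_Ico.mp hk
    have hsplit : ((2*b : ℕ):ℤ) = 2*(b:ℤ) := by push_cast; ring
    have haZ : (a:ℤ) = 2*(a':ℤ) := by exact_mod_cast congrArg (Nat.cast : ℕ → ℤ) ha2
    rw [hsplit, haZ] at hdvd
    have h2 : (2:ℤ)*(b:ℤ) ∣ 2*((a':ℤ)*k) := by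
      rw [show (2:ℤ)*((a':ℤ)*k) = 2*(a':ℤ)*(k:ℤ) by ring]
      exact hdvd
    have hb' : (b:ℤ) ∣ (a':ℤ)*k := (mul_dvd_mul_iff_left (by norm_num : (2:ℤ) ≠ 0)).mp h2
    have hdk : (b:ℤ) ∣ (k:ℤ) := hcopZ'.dvd_of_dvd_mul_left hb'
    have hdkN : b ∣ k := by exact_mod_cast hdk
    obtain ⟨m, rfl⟩ := hdkN
    have hm1 : 1 ≤ m := by
      rcases Nat.eq_zero_or_pos m with h0 | h1
      · subst h0; simp at hk1
      · exact h1
    have hm2 : m < 2 := by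
      by_contra hcon
      push_neg at hcon
      have : 2*b ≤ b*m := by nlinarith
      omega
    have : m = 1 := by omega
    subst this
    ring
  -- express Qpart via SZ
  have hq : Qpart a b = 6*(SZ (a:ℤ) (2*b) + SZ ((2*a : ℕ):ℤ) b - 2*SZ (a:ℤ) b) := by
    unfold Qpart
    rw [SZ_eq_saw (a:ℤ) (2*b) (by omega) H3, SZ_eq_saw ((2*a : ℕ):ℤ) b hb H2,
      SZ_eq_saw (a:ℤ) b hb H1]
    push_cast
    ring
  -- periodic functions
  have hAAper : ∀ m, AA b (m + b) = AA b m := AA_per b hb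
  have hBBper : ∀ m, BB b (m + b) = BB b m := BB_per b hb
  have hAA2per : ∀ m, AA (2*b) (m + (2*b : ℕ)) = AA (2*b) m := AA_per (2*b) (by omega)
  have haZ : (a:ℤ) = 2*(a':ℤ) := by exact_mod_cast congrArg (Nat.cast : ℕ → ℤ) ha2
  -- E1 : SZ a (2b) = SZ a b + P
  set P : ℝ := ∑ μ ∈ range b, BB b μ * AA b ((a:ℤ)*μ) with hP
  have E1 : SZ (a:ℤ) (2*b) = SZ (a:ℤ) b + P := by
    unfold SZ
    rw [even_odd_split b (fun l => AA (2*b) (l:ℤ) * AA (2*b) ((a:ℤ)*(l:ℤ)))]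
    have heven : ∑ μ ∈ range b, AA (2*b) (((2*μ : ℕ)):ℤ) * AA (2*b) ((a:ℤ)*((2*μ : ℕ):ℤ))
        = ∑ μ ∈ range b, AA b (μ:ℤ) * AA b ((a:ℤ)*μ) := by
      apply Finset.sum_congr rfl
      intro μ _
      unfold AA
      have u1 : (((2*μ : ℕ):ℤ):ℝ)/((2*b : ℕ):ℝ) = ((μ:ℤ):ℝ)/(b:ℝ) := by
        push_cast
        rw [div_eq_div_iff (by positivity) (by positivity)]
        ring
      have u2 : (((a:ℤ)*((2*μ : ℕ):ℤ) : ℤ):ℝ)/((2*b : ℕ):ℝ) = (((a:ℤ)*(μ:ℤ) : ℤ):ℝ)/(b:ℝ) := by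
        push_cast
        rw [div_eq_div_iff (by positivity) (by positivity)]
        ring
      rw [u1, u2]
    have hodd : ∑ μ ∈ range b, AA (2*b) (((2*μ+1 : ℕ)):ℤ) * AA (2*b) ((a:ℤ)*((2*μ+1 : ℕ):ℤ))
        = P := by
      set F : ℤ → ℝ := fun m => AA (2*b) (2*m+1) * AA (2*b) ((a:ℤ)*(2*m+1)) with hF
      have hFper : ∀ m, F (m + b) = F m := by
        intro m
        have e1 : 2*(m + b)+1 = (2*m+1) + (2*b : ℕ)*1 := by push_cast; ring
        have e2 : (a:ℤ)*(2*(m + b)+1) = (a:ℤ)*(2*m+1) + (2*b : ℕ)*(a:ℤ) := by push_cast; ring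
        show AA (2*b) (2*(m+b)+1) * AA (2*b) ((a:ℤ)*(2*(m+b)+1)) = F m
        rw [e2, e1, per_int (2*b) (AA (2*b)) hAA2per, per_int (2*b) (AA (2*b)) hAA2per]
      have step1 : ∑ μ ∈ range b, AA (2*b) (((2*μ+1 : ℕ)):ℤ) * AA (2*b) ((a:ℤ)*((2*μ+1 : ℕ):ℤ))
          = ∑ μ ∈ range b, F (μ:ℤ) := by
        apply Finset.sum_congr rfl
        intro μ _
        rw [hF]
        beta_reduce
        congr 2 <;> push_cast <;> ring
      rw [step1, ← sum_shift b hb F hFper (j:ℤ)]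
      apply Finset.sum_congr rfl
      intro μ _
      rw [hF]
      beta_reduce
      have e1 : 2*((μ:ℤ) + j)+1 = 2*(μ:ℤ) + b := by
        have : (b:ℤ) = 2*(j:ℤ)+1 := by exact_mod_cast congrArg (Nat.cast : ℕ → ℤ) hj
        rw [this]; ring
      rw [e1]
      congr 1
      · unfold AA BB
        congr 1
        push_cast
        field_simp
      · unfold AA
        have e2 : (((a:ℤ)*(2*(μ:ℤ) + b) : ℤ):ℝ)/((2*b : ℕ):ℝ) = (((a:ℤ)*μ : ℤ):ℝ)/b + ((a':ℤ):ℝ) := by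
          rw [haZ]
          push_cast
          field_simp
        rw [e2, gg_add_int]
    rw [heven, hodd]
  -- E2 : SZ 2a b = SZ a b + R
  set R : ℝ := ∑ μ ∈ range b, AA b μ * BB b ((a:ℤ)*μ) with hR
  have E2 : SZ ((2*a : ℕ):ℤ) b = SZ (a:ℤ) b + R := by
    unfold SZ
    rw [← Finset.sum_add_distrib]
    apply Finset.sum_congr rfl
    intro μ _
    have e1 : ((2*a : ℕ):ℤ)*μ = 2*((a:ℤ)*μ) := by push_cast; ring
    rw [e1, BB_eq b hb ((a:ℤ)*μ)]
    ring
  -- T1 = SZ a b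
  have T1 : ∑ μ ∈ range b, AA b (2*(μ:ℤ)) * AA b (2*((a:ℤ)*μ)) = SZ (a:ℤ) b := by
    set f : ℤ → ℝ := fun m => AA b m * AA b ((a:ℤ)*m) with hf
    have hfper : ∀ m, f (m + b) = f m := by
      intro m
      show AA b (m+b) * AA b ((a:ℤ)*(m+b)) = AA b m * AA b ((a:ℤ)*m)
      rw [hAAper, show (a:ℤ)*(m+(b:ℤ)) = (a:ℤ)*m + (b:ℤ)*(a:ℤ) by ring,
        per_int b (AA b) hAAper]
    have hperm := sum_perm b hb f hfper 2 ((j:ℤ)+1) (by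
      have : (b:ℤ) = 2*(j:ℤ)+1 := by exact_mod_cast congrArg (Nat.cast : ℕ → ℤ) hj
      rw [this]
      exact ⟨1, by ring⟩)
    unfold SZ
    rw [← hperm]
    apply Finset.sum_congr rfl
    intro μ _
    rw [hf]
    beta_reduce
    congr 2
    ring
  -- W and its两 expansions
  set W : ℝ := ∑ μ ∈ range b, BB b μ * BB b ((a:ℤ)*μ) with hW
  have EW : W = SZ (a:ℤ) b - (P + SZ (a:ℤ) b) - (R + SZ (a:ℤ) b) + SZ (a:ℤ) b := by
    have expand : W = ∑ μ ∈ range b,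
        (AA b (2*(μ:ℤ)) * AA b (2*((a:ℤ)*μ))
          - AA b (2*(μ:ℤ)) * AA b ((a:ℤ)*μ)
          - AA b (μ:ℤ) * AA b (2*((a:ℤ)*μ))
          + AA b (μ:ℤ) * AA b ((a:ℤ)*μ)) := by
      rw [hW]
      apply Finset.sum_congr rfl
      intro μ _
      rw [BB_eq b hb (μ:ℤ), BB_eq b hb ((a:ℤ)*μ)]
      ring
    have hP2 : ∑ μ ∈ range b, AA b (2*(μ:ℤ)) * AA b ((a:ℤ)*μ) = P + SZ (a:ℤ) b := by
      rw [hP]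
      unfold SZ
      rw [← Finset.sum_add_distrib]
      apply Finset.sum_congr rfl
      intro μ _
      rw [BB_eq b hb (μ:ℤ)]
      ring
    have hR2 : ∑ μ ∈ range b, AA b (μ:ℤ) * AA b (2*((a:ℤ)*μ)) = R + SZ (a:ℤ) b := by
      rw [hR]
      unfold SZ
      rw [← Finset.sum_add_distrib]
      apply Finset.sum_congr rfl
      intro μ _
      rw [BB_eq b hb ((a:ℤ)*μ)]
      ring
    rw [expand]
    rw [Finset.sum_add_distrib, Finset.sum_sub_distrib, Finset.sum_sub_distrib,
      T1, hP2, hR2]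
    unfold SZ
    ring
  -- W = T / b^2
  have hWT : W = ((∑ μ ∈ range b, rr b μ * rr b ((a:ℤ)*μ) : ℤ) : ℝ) / (b:ℝ)^2 := by
    rw [hW]
    push_cast
    rw [Finset.sum_div]
    apply Finset.sum_congr rfl
    intro μ _
    unfold BB
    rw [gg_rr b hb (μ:ℤ), gg_rr b hb ((a:ℤ)*μ)]
    push_cast
    ring
  -- conclude
  rw [hq, E1, E2, show 6*((SZ (a:ℤ) b + P) + (SZ (a:ℤ) b + R) - 2*SZ (a:ℤ) b) = 6*(P+R) by ring]
  have hPR : P + R = -W := by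
    rw [EW]; ring
  rw [hPR, hWT]
  field_simp

lemma rr_mod (b : ℕ) (m : ℤ) : (b:ℤ) ∣ (rr b m - m) :=
  ⟨-⌊(m:ℝ)/b + 1/2⌋, by unfold rr; ring⟩

lemma NT1 (a b : ℕ) (hb : 0 < b) (hbodd : Odd b) (hcop : Nat.gcd a b = 1)
    (hdvd : (b:ℤ) ∣ (a:ℤ)^2 + 1) :
    ∑ μ ∈ range b, rr b μ * rr b ((a:ℤ)*μ) = 0 := by
  have hcopZ : IsCoprime (b:ℤ) (a:ℤ) := by
    rw [Int.isCoprime_iff_gcd_eq_one, Int.gcd_natCast_natCast, Nat.gcd_comm]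
    exact hcop
  obtain ⟨u, v, huv⟩ := hcopZ
  set f : ℤ → ℤ := fun m => rr b m * rr b ((a:ℤ)*m) with hf
  have hper : ∀ m, f (m + b) = f m := by
    intro m
    show rr b (m + b) * rr b ((a:ℤ)*(m+b)) = rr b m * rr b ((a:ℤ)*m)
    rw [rr_period b hb, show (a:ℤ)*(m + (b:ℤ)) = (a:ℤ)*m + (b:ℤ)*(a:ℤ) by ring,
      per_int b (rr b) (rr_period b hb)]
  have hperm := sum_perm b hb f hper (a:ℤ) v ⟨-u, by linarith [huv]⟩
  obtain ⟨t, ht⟩ := hdvd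
  have key : ∀ μ : ℕ, f ((a:ℤ)*μ) = - f μ := by
    intro μ
    show rr b ((a:ℤ)*μ) * rr b ((a:ℤ)*((a:ℤ)*μ)) = -(rr b μ * rr b ((a:ℤ)*μ))
    have e1 : (a:ℤ)*((a:ℤ)*μ) = -(μ:ℤ) + (b:ℤ)*(t*μ) := by
      have : (a:ℤ)^2 = (b:ℤ)*t - 1 := by linarith [ht]
      calc (a:ℤ)*((a:ℤ)*μ) = (a:ℤ)^2 * μ := by ring
        _ = ((b:ℤ)*t - 1) * μ := by rw [this]
        _ = -(μ:ℤ) + (b:ℤ)*(t*μ) := by ring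
    rw [e1, per_int b (rr b) (rr_period b hb), rr_neg b hbodd]
    ring
  have h1 : ∑ μ ∈ range b, f ((a:ℤ)*μ) = - ∑ μ ∈ range b, f μ := by
    rw [← Finset.sum_neg_distrib]
    exact Finset.sum_congr rfl (fun μ _ => key μ)
  rw [hperm] at h1
  have h2 : ∑ μ ∈ range b, f (μ:ℤ) = 0 := by linarith [h1]
  have h3 : ∑ μ ∈ range b, f (μ:ℤ) = ∑ μ ∈ range b, rr b μ * rr b ((a:ℤ)*μ) := by
    apply Finset.sum_congr rfl
    intro μ _
    rw [hf]
  rw [h3] at h2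
  exact h2

lemma NT2 (a b : ℕ) (hb : 0 < b) (hbodd : Odd b) (hcop : Nat.gcd a b = 1)
    (z : ℤ) (hz : (b:ℤ)^2 * z = -6 * ∑ μ ∈ range b, rr b μ * rr b ((a:ℤ)*μ)) :
    (b:ℤ) ∣ (a:ℤ)^2 + 1 := by
  have hbZ : (b:ℤ) ≠ 0 := by exact_mod_cast hb.ne'
  have hcopZ : IsCoprime (b:ℤ) (a:ℤ) := by
    rw [Int.isCoprime_iff_gcd_eq_one, Int.gcd_natCast_natCast, Nat.gcd_comm]
    exact hcop
  obtain ⟨u, v, huv⟩ := hcopZ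
  set D : ℕ → ℤ := fun μ => (a:ℤ) * rr b μ - rr b ((a:ℤ)*μ) with hD
  have hDdvd : ∀ μ : ℕ, (b:ℤ) ∣ D μ := by
    intro μ
    have h1 := rr_mod b (μ:ℤ)
    have h2 := rr_mod b ((a:ℤ)*μ)
    have : D μ = (a:ℤ) * (rr b μ - μ) - (rr b ((a:ℤ)*μ) - (a:ℤ)*μ) := by rw [hD]; ring
    rw [this]
    exact dvd_sub (h1.mul_left _) h2
  set S2 : ℤ := ∑ μ ∈ range b, (rr b μ)^2 with hS2def
  have hS2 : 12 * S2 = b*((b:ℤ)^2-1) := rr_sq_sum b hbodd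
  have hS2' : ∑ μ ∈ range b, (rr b ((a:ℤ)*μ))^2 = S2 := by
    set f : ℤ → ℤ := fun m => (rr b m)^2 with hf
    have hper : ∀ m, f (m + b) = f m := by
      intro m
      show (rr b (m+b))^2 = (rr b m)^2
      rw [rr_period b hb]
    exact sum_perm b hb f hper (a:ℤ) v ⟨-u, by linarith [huv]⟩
  have hcdvd : (b:ℤ) ∣ ∑ μ ∈ range b, D μ * rr b μ :=
    Finset.dvd_sum (fun μ _ => (hDdvd μ).mul_right _)
  obtain ⟨c, hc⟩ := hcdvd
  have hfdvd : (b:ℤ)^2 ∣ ∑ μ ∈ range b, (D μ)^2 := by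
    apply Finset.dvd_sum
    intro μ _
    obtain ⟨d, hd⟩ := hDdvd μ
    exact ⟨d^2, by rw [hd]; ring⟩
  obtain ⟨f, hf⟩ := hfdvd
  have hT : ∑ μ ∈ range b, rr b μ * rr b ((a:ℤ)*μ) = (a:ℤ)*S2 - (b:ℤ)*c := by
    rw [← hc, hS2def, Finset.mul_sum, ← Finset.sum_sub_distrib]
    apply Finset.sum_congr rfl
    intro μ _
    have : rr b ((a:ℤ)*μ) = (a:ℤ)*rr b μ - D μ := by rw [hD]; ring
    rw [this]
    ring
  have hSq : S2 = (a:ℤ)^2*S2 - 2*(a:ℤ)*((b:ℤ)*c) + (b:ℤ)^2*f := by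
    have e : ∀ μ ∈ range b, (rr b ((a:ℤ)*μ))^2
        = (a:ℤ)^2*(rr b μ)^2 - 2*(a:ℤ)*(D μ * rr b μ) + (D μ)^2 := by
      intro μ _
      have hrw : rr b ((a:ℤ)*μ) = (a:ℤ)*rr b μ - D μ := by rw [hD]; ring
      rw [hrw]
      ring
    have e1 := Finset.sum_congr rfl e
    rw [hS2', Finset.sum_add_distrib, Finset.sum_sub_distrib, ← Finset.mul_sum,
      ← Finset.mul_sum, hc, hf, ← hS2def] at e1
    linarith [e1]
  rw [hT] at hz
  -- 2bz = -a(b²-1) + 12c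
  have h12 : (b:ℤ) * (2*(b:ℤ)*z + (a:ℤ)*((b:ℤ)^2-1) - 12*c) = 0 := by
    linear_combination 2*hz - (a:ℤ)*hS2
  have h12' : 2*(b:ℤ)*z + (a:ℤ)*((b:ℤ)^2-1) - 12*c = 0 := by
    rcases mul_eq_zero.mp h12 with h | h
    · exact absurd h hbZ
    · exact h
  -- (a²-1)(b²-1) = 24ac - 12bf
  have hmain : (b:ℤ) * (((a:ℤ)^2-1)*((b:ℤ)^2-1) - 24*(a:ℤ)*c + 12*(b:ℤ)*f) = 0 := by
    linear_combination (-((a:ℤ)^2-1))*hS2 - 12*hSq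
  have hmain' : ((a:ℤ)^2-1)*((b:ℤ)^2-1) - 24*(a:ℤ)*c + 12*(b:ℤ)*f = 0 := by
    rcases mul_eq_zero.mp hmain with h | h
    · exact absurd h hbZ
    · exact h
  -- combine
  have hdvd : (b:ℤ) ∣ ((a:ℤ)^2+1)*((b:ℤ)^2-1) := by
    refine ⟨12*f - 4*(a:ℤ)*z, ?_⟩
    linear_combination -hmain' + 2*(a:ℤ)*h12'
  have hco : IsCoprime (b:ℤ) ((b:ℤ)^2 - 1) := ⟨(b:ℤ), -1, by ring⟩
  exact hco.dvd_of_dvd_mul_right hdvd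


theorem Qpart_int_imp (a b : ℕ) (ha : 0 < a) (hb : 0 < b) (haev : Even a) (hbodd : Odd b)
    (hcop : Nat.gcd a b = 1) :
    ((∃ z : ℤ, Qpart a b = (z : ℝ)) → (b : ℤ) ∣ (a : ℤ) ^ 2 + 1) ∧
      (Qpart a b = 0 ↔ (b : ℤ) ∣ (a : ℤ) ^ 2 + 1) := by
  have key := key_real a b ha hb haev hbodd hcop
  set T : ℤ := ∑ μ ∈ range b, rr b μ * rr b ((a:ℤ)*μ) with hT
  have hbR : (0:ℝ) < b := by exact_mod_cast hb
  have main : (∃ z : ℤ, Qpart a b = (z:ℝ)) → (b:ℤ) ∣ (a:ℤ)^2+1 := by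
    rintro ⟨z, hzq⟩
    apply NT2 a b hb hbodd hcop z
    rw [← hT]
    have hR : (((b:ℤ)^2 * z : ℤ):ℝ) = ((-6*T : ℤ):ℝ) := by
      push_cast
      rw [hzq] at key
      push_cast at key
      linarith [key]
    exact_mod_cast hR
  refine ⟨main, ⟨fun h0 => main ⟨0, by rw [h0]; norm_num⟩, fun hdvd => ?_⟩⟩
  have hT0 : T = 0 := NT1 a b hb hbodd hcop hdvd
  rw [hT0] at key
  have : (b:ℝ)^2 * Qpart a b = 0 := by
    rw [key]
    norm_num
  rcases mul_eq_zero.mp this with h | h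
  · exact absurd h (by positivity)
  · exact h
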